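/- arXiv:1511.03164 — 2 statements merged into one kernel-verified Lean document; each statement's English description precedes it below -/
import Mathlib

section
/- Let W_n = A_n/⟨t^{n-1}Σ_{g∈G} g⟩ be the cokernel of the A_n-linear map k → A_n sending 1 to t^{n-1}·Σ_{g∈G} g, and let C be the cokernel of the A_n-linear map R_n → A_n sending 1 to Σ_{g∈G} g. Then there is a short exact sequence of A_n-modules 0 → R_{n-1} → W_n → C → 0, where R_{n-1} carries the trivial G-action, and this sequence splits after restriction of scalars along the inclusion R_n → A_n. -/
open scoped TensorProduct DirectSum

set_option linter.unusedSectionVars false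

noncomputable section

variable (S : Type) [CommRing S] [IsDomain S] [IsDiscreteValuationRing S]
variable (t : S)
variable (G : Type) [Group G] [Fintype G]

/-- `Rq n` is the quotient ring `R_n = S/(t^n)`. -/
abbrev Rq (n : ℕ) : Type := S ⧸ Ideal.span {t ^ n}

/-- `Aq n` is the group algebra `A_n = R_n G`. -/
abbrev Aq (n : ℕ) : Type := MonoidAlgebra (Rq S t n) G

/-- The canonical surjection `R_n → R_i` for `i ≤ n`. -/
def Rmap (i n : ℕ) (h : i ≤ n) : Rq S t n →+* Rq S t i :=
  Ideal.Quotient.factor (Ideal.span_singleton_le_span_singleton.mpr (pow_dvd_pow t h))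

/-- The canonical surjection `A_n → A_i` for `i ≤ n`, induced by `R_n → R_i`. -/
def Amap (i n : ℕ) (h : i ≤ n) : Aq S t G n →+* Aq S t G i :=
  letI : Algebra (Rq S t n) (Aq S t G i) :=
    RingHom.toAlgebra' ((algebraMap (Rq S t i) (Aq S t G i)).comp (Rmap S t i n h))
      (fun r x => Algebra.commutes (Rmap S t i n h r) x)
  ((MonoidAlgebra.lift (Rq S t n) (Aq S t G i) G) (MonoidAlgebra.of (Rq S t i) G)).toRingHom

/-- The augmentation map `A_n → R_n`, `Σ r_g g ↦ Σ r_g`. -/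
def aug (n : ℕ) : Aq S t G n →+* Rq S t n :=
  ((MonoidAlgebra.lift (Rq S t n) (Rq S t n) G) 1).toRingHom

/-- The image of `t` in `R_n`. -/
def tbar (n : ℕ) : Rq S t n := Ideal.Quotient.mk _ t

/-- The norm element `Σ_{g ∈ G} g` of `A_n`. -/
def sigmaEl (n : ℕ) : Aq S t G n := ∑ g : G, MonoidAlgebra.of (Rq S t n) G g

/-- The element `t^{i-1} Σ_{g ∈ G} g` of `A_i`. -/
def wEl (i : ℕ) : Aq S t G i :=
  algebraMap (Rq S t i) (Aq S t G i) (tbar S t i ^ (i - 1)) * sigmaEl S t G i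

/-- `W_i = A_i/⟨t^{i-1} Σ_{g∈G} g⟩`. -/
abbrev Wmod (i : ℕ) : Type :=
  Aq S t G i ⧸ Submodule.span (Aq S t G i) {wEl S t G i}

/-- The submodule `t^m X` of an `A_n`-module `X`. -/
def tSub (n m : ℕ) (X : Type) [AddCommGroup X] [Module (Aq S t G n) X] :
    Submodule (Aq S t G n) X :=
  Submodule.span (Aq S t G n)
    (Set.range fun x : X => algebraMap (Rq S t n) (Aq S t G n) (tbar S t n ^ m) • x)


variable (n : ℕ)

/-- auxiliary: the composite `S → R_n → A_n`. -/
def cmap : S →+* Aq S t G n :=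
  (algebraMap (Rq S t n) (Aq S t G n)).comp (Ideal.Quotient.mk (Ideal.span {t ^ n}))

lemma cmap_apply (s : S) :
    cmap S t G n s = algebraMap (Rq S t n) (Aq S t G n) (Ideal.Quotient.mk _ s) := rfl

lemma of_mul_sigma (g : G) :
    MonoidAlgebra.of (Rq S t n) G g * sigmaEl S t G n = sigmaEl S t G n := by
  unfold sigmaEl
  rw [Finset.mul_sum]
  exact Fintype.sum_equiv (Equiv.mulLeft g) _ _ (fun h => (map_mul _ _ _).symm)

lemma aug_of (g : G) : aug S t G n (MonoidAlgebra.of (Rq S t n) G g) = 1 := by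
  simp [aug]

lemma aug_algebraMap (r : Rq S t n) :
    aug S t G n (algebraMap (Rq S t n) (Aq S t G n) r) = r :=
  ((MonoidAlgebra.lift (Rq S t n) (Rq S t n) G) 1).commutes r

lemma mul_sigma (a : Aq S t G n) :
    a * sigmaEl S t G n
      = algebraMap (Rq S t n) (Aq S t G n) (aug S t G n a) * sigmaEl S t G n := by
  induction a using MonoidAlgebra.induction_on with
  | of g => rw [of_mul_sigma, aug_of, map_one, one_mul]
  | add f h hf hh => rw [add_mul, hf, hh, map_add, map_add, add_mul]
  | smul r f hf =>
      rw [Algebra.smul_def, map_mul, aug_algebraMap, mul_assoc, hf, ← mul_assoc, ← map_mul]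

lemma algebraMap_mul_sigma (r : Rq S t n) :
    algebraMap (Rq S t n) (Aq S t G n) r * sigmaEl S t G n
      = ∑ g : G, MonoidAlgebra.single g r := by
  unfold sigmaEl
  rw [Finset.mul_sum]
  refine Finset.sum_congr rfl fun g _ => ?_
  rw [MonoidAlgebra.coe_algebraMap]
  show MonoidAlgebra.single 1 r * MonoidAlgebra.single g 1 = _
  rw [MonoidAlgebra.single_mul_single, one_mul, mul_one]

lemma sigma_coeff (r : Rq S t n) :
    (algebraMap (Rq S t n) (Aq S t G n) r * sigmaEl S t G n).coeff 1 = r := by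
  rw [algebraMap_mul_sigma]
  rw [MonoidAlgebra.coeff_sum, Finsupp.finset_sum_apply]
  simp [MonoidAlgebra.coeff_single, Finsupp.single_apply]

lemma sigma_cancel {r s : Rq S t n}
    (h : algebraMap (Rq S t n) (Aq S t G n) r * sigmaEl S t G n
       = algebraMap (Rq S t n) (Aq S t G n) s * sigmaEl S t G n) : r = s := by
  have h1 : (algebraMap (Rq S t n) (Aq S t G n) r * sigmaEl S t G n).coeff 1
      = (algebraMap (Rq S t n) (Aq S t G n) s * sigmaEl S t G n).coeff 1 := by rw [h]
  rwa [sigma_coeff, sigma_coeff] at h1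

lemma mul_wEl (a : Aq S t G n) :
    a * wEl S t G n
      = algebraMap (Rq S t n) (Aq S t G n) (tbar S t n ^ (n - 1) * aug S t G n a)
          * sigmaEl S t G n := by
  unfold wEl
  rw [← mul_assoc, ← Algebra.commutes (tbar S t n ^ (n-1)) a, mul_assoc, mul_sigma,
    ← mul_assoc, ← map_mul]

lemma tbar_pow_self (m : ℕ) : tbar S t m ^ m = 0 := by
  unfold tbar
  rw [← map_pow, Ideal.Quotient.eq_zero_iff_mem]
  exact Ideal.subset_span rfl

lemma Rmap_mk (i : ℕ) (h : i ≤ n) (s : S) :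
    Rmap S t i n h (Ideal.Quotient.mk _ s) = Ideal.Quotient.mk _ s :=
  Ideal.Quotient.factor_mk _ s

lemma Rmap_kill (r : Rq S t n) :
    Rmap S t (n-1) n (Nat.sub_le n 1) (tbar S t n ^ (n - 1) * r) = 0 := by
  rw [map_mul, map_pow]
  have h1 : Rmap S t (n-1) n (Nat.sub_le n 1) (tbar S t n) = tbar S t (n-1) :=
    Rmap_mk S t n (n-1) (Nat.sub_le n 1) t
  rw [h1, tbar_pow_self, zero_mul]

lemma a_mul_cmap_sigma (a : Aq S t G n) {u : S} (s : S)
    (hu : Ideal.Quotient.mk (Ideal.span {t ^ n}) u = aug S t G n a) :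
    a * (cmap S t G n s * sigmaEl S t G n) = cmap S t G n (u * s) * sigmaEl S t G n := by
  rw [cmap_apply, cmap_apply, map_mul, map_mul, ← mul_assoc,
    ← Algebra.commutes (Ideal.Quotient.mk (Ideal.span {t ^ n}) s) a, mul_assoc,
    mul_sigma, ← hu, ← mul_assoc,
    ← map_mul, mul_comm (Ideal.Quotient.mk (Ideal.span {t ^ n}) s), map_mul]


set_option maxHeartbeats 1000000 in
/-- With `W_n = A_n/⟨t^{n-1}Σ_{g∈G} g⟩` and `C` the cokernel of the
`A_n`-linear map `R_n → A_n`, `1 ↦ Σ_{g∈G} g`, there is a short exact sequence of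
`A_n`-modules `0 → R_{n-1} → W_n → C → 0` (with `R_{n-1}` carrying the trivial `G`-action)
which splits after restriction of scalars along `R_n → A_n`. -/
theorem statement3 (ht : Irreducible t) (n : ℕ) (hn : 1 ≤ n) :
    letI : Module (Aq S t G n) (Rq S t (n - 1)) :=
      Module.compHom _ ((Rmap S t (n - 1) n (Nat.sub_le n 1)).comp (aug S t G n))
    letI : Module (Rq S t n) (Rq S t (n - 1)) :=
      Module.compHom _ (Rmap S t (n - 1) n (Nat.sub_le n 1))
    ∃ (f : Rq S t (n - 1) →ₗ[Aq S t G n] Wmod S t G n)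
      (g : Wmod S t G n →ₗ[Aq S t G n]
        (Aq S t G n ⧸ Submodule.span (Aq S t G n) {sigmaEl S t G n})),
      Function.Injective f ∧ Function.Surjective g ∧
        LinearMap.range f = LinearMap.ker g ∧
        ∃ r : Wmod S t G n →ₗ[Rq S t n] Rq S t (n - 1), ∀ x, r (f x) = x := by
  letI : Module (Aq S t G n) (Rq S t (n - 1)) :=
    Module.compHom _ ((Rmap S t (n - 1) n (Nat.sub_le n 1)).comp (aug S t G n))
  letI : Module (Rq S t n) (Rq S t (n - 1)) :=
    Module.compHom _ (Rmap S t (n - 1) n (Nat.sub_le n 1))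
  set p : Submodule (Aq S t G n) (Aq S t G n) :=
    Submodule.span (Aq S t G n) {wEl S t G n} with hp
  set q : Submodule (Aq S t G n) (Aq S t G n) :=
    Submodule.span (Aq S t G n) {sigmaEl S t G n} with hq
  -- the S-linear map S → W
  have halg : algebraMap S (Aq S t G n) = cmap S t G n := by
    rw [IsScalarTower.algebraMap_eq S (Rq S t n) (Aq S t G n), Ideal.Quotient.algebraMap_eq]
    rfl
  let ψ : S →ₗ[S] Wmod S t G n :=
    { toFun := fun s => Submodule.Quotient.mk (cmap S t G n s * sigmaEl S t G n)
      map_add' := fun x y => by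
        show Submodule.Quotient.mk (cmap S t G n (x + y) * sigmaEl S t G n)
            = Submodule.Quotient.mk (cmap S t G n x * sigmaEl S t G n)
              + Submodule.Quotient.mk (cmap S t G n y * sigmaEl S t G n)
        rw [map_add, add_mul]
        exact Submodule.Quotient.mk_add p
      map_smul' := fun r x => by
        rw [RingHom.id_apply]
        show Submodule.Quotient.mk (cmap S t G n (r * x) * sigmaEl S t G n)
            = r • Submodule.Quotient.mk (cmap S t G n x * sigmaEl S t G n)
        rw [← Submodule.Quotient.mk_smul p, Algebra.smul_def, halg, map_mul, mul_assoc] }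
  have hψ : ∀ s : S,
      ψ s = Submodule.Quotient.mk (cmap S t G n s * sigmaEl S t G n) := fun _ => rfl
  have hct : cmap S t G n (t ^ (n-1))
      = algebraMap (Rq S t n) (Aq S t G n) (tbar S t n ^ (n-1)) := by
    rw [cmap_apply, map_pow]
    rfl
  have hker : (Ideal.span {t ^ (n-1)} : Ideal S) ≤ LinearMap.ker ψ := by
    rw [Ideal.span_le, Set.singleton_subset_iff]
    show ψ (t ^ (n-1)) = 0
    rw [hψ, hct]
    exact (Submodule.Quotient.mk_eq_zero p).mpr (Submodule.mem_span_singleton_self _)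
  let f0 : Rq S t (n-1) →ₗ[S] Wmod S t G n := Submodule.liftQ _ ψ hker
  have hf0 : ∀ s : S, f0 (Ideal.Quotient.mk _ s)
      = Submodule.Quotient.mk (cmap S t G n s * sigmaEl S t G n) := fun _ => rfl
  let f : Rq S t (n - 1) →ₗ[Aq S t G n] Wmod S t G n :=
    { toFun := f0, map_add' := map_add f0
      map_smul' := by
        intro a x
        obtain ⟨s, rfl⟩ := Ideal.Quotient.mk_surjective x
        obtain ⟨u, hu⟩ := Ideal.Quotient.mk_surjective (aug S t G n a)
        have h1 : a • (Ideal.Quotient.mk (Ideal.span {t ^ (n-1)}) s : Rq S t (n-1))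
            = Ideal.Quotient.mk _ (u * s) := by
          show Rmap S t (n-1) n (Nat.sub_le n 1) (aug S t G n a)
              * Ideal.Quotient.mk _ s = _
          rw [← hu, Rmap_mk, ← map_mul]
        rw [RingHom.id_apply]
        show f0 (a • (Ideal.Quotient.mk (Ideal.span {t ^ (n-1)}) s : Rq S t (n-1)))
            = a • f0 (Ideal.Quotient.mk _ s)
        rw [h1, hf0, hf0, ← Submodule.Quotient.mk_smul p, smul_eq_mul,
          a_mul_cmap_sigma S t G n a s hu] }
  have hf : ∀ s : S, f (Ideal.Quotient.mk _ s)
      = Submodule.Quotient.mk (cmap S t G n s * sigmaEl S t G n) := fun _ => rfl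
  have hpq : p ≤ q := by
    rw [hp, hq, Submodule.span_le, Set.singleton_subset_iff]
    exact Submodule.mem_span_singleton.mpr ⟨algebraMap _ _ (tbar S t n ^ (n-1)), rfl⟩
  let g : Wmod S t G n →ₗ[Aq S t G n] (Aq S t G n ⧸ q) :=
    Submodule.liftQ p q.mkQ (by rw [Submodule.ker_mkQ]; exact hpq)
  have hg : ∀ a : Aq S t G n, g (Submodule.Quotient.mk a) = Submodule.Quotient.mk a :=
    fun _ => rfl
  refine ⟨f, g, ?_, ?_, ?_, ?_⟩
  · -- injectivity
    refine (injective_iff_map_eq_zero f).mpr ?_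
    intro z hz
    obtain ⟨s, rfl⟩ := Ideal.Quotient.mk_surjective z
    rw [hf] at hz
    obtain ⟨a, ha⟩ := Submodule.mem_span_singleton.mp ((Submodule.Quotient.mk_eq_zero p).mp hz)
    rw [smul_eq_mul, mul_wEl, cmap_apply] at ha
    have h2 := sigma_cancel S t G n ha
    show (Ideal.Quotient.mk (Ideal.span {t ^ (n-1)}) s : Rq S t (n-1)) = 0
    rw [← Rmap_mk S t n (n-1) (Nat.sub_le n 1) s, ← h2, Rmap_kill]
  · -- surjectivity
    intro y
    obtain ⟨a, rfl⟩ := Submodule.Quotient.mk_surjective q y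
    exact ⟨Submodule.Quotient.mk a, rfl⟩
  · -- exactness
    ext x
    simp only [LinearMap.mem_range, LinearMap.mem_ker]
    constructor
    · rintro ⟨z, rfl⟩
      obtain ⟨s, rfl⟩ := Ideal.Quotient.mk_surjective z
      rw [hf, hg]
      exact (Submodule.Quotient.mk_eq_zero q).mpr
        (Submodule.mem_span_singleton.mpr ⟨cmap S t G n s, rfl⟩)
    · intro hx
      obtain ⟨a, rfl⟩ := Submodule.Quotient.mk_surjective p x
      rw [hg] at hx
      obtain ⟨b, hb⟩ := Submodule.mem_span_singleton.mp ((Submodule.Quotient.mk_eq_zero q).mp hx)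
      obtain ⟨u, hu⟩ := Ideal.Quotient.mk_surjective (aug S t G n b)
      refine ⟨Ideal.Quotient.mk _ u, ?_⟩
      rw [hf]
      congr 1
      rw [← hb, smul_eq_mul, mul_sigma S t G n b, ← hu, cmap_apply]
  · -- retraction
    let φ : Aq S t G n →ₗ[Rq S t n] Rq S t (n-1) :=
      { toFun := fun a => Rmap S t (n-1) n (Nat.sub_le n 1) (a.coeff 1)
        map_add' := fun a b => by
          show Rmap S t (n-1) n (Nat.sub_le n 1) ((a + b).coeff 1)
              = Rmap S t (n-1) n (Nat.sub_le n 1) (a.coeff 1) + Rmap S t (n-1) n (Nat.sub_le n 1) (b.coeff 1)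
          rw [MonoidAlgebra.coeff_add, Finsupp.add_apply, map_add]
        map_smul' := fun c a => by
          rw [RingHom.id_apply]
          show Rmap S t (n-1) n (Nat.sub_le n 1) ((c • a).coeff 1)
              = Rmap S t (n-1) n (Nat.sub_le n 1) c * Rmap S t (n-1) n (Nat.sub_le n 1) (a.coeff 1)
          rw [MonoidAlgebra.coeff_smul, Finsupp.smul_apply, smul_eq_mul, map_mul] }
    have hφk : p.restrictScalars (Rq S t n) ≤ LinearMap.ker φ := by
      intro x hx
      rw [Submodule.restrictScalars_mem] at hx
      obtain ⟨a, ha⟩ := Submodule.mem_span_singleton.mp hx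
      rw [LinearMap.mem_ker]
      show Rmap S t (n-1) n (Nat.sub_le n 1) (x.coeff 1) = 0
      rw [← ha, smul_eq_mul, mul_wEl, sigma_coeff, Rmap_kill]
    let req := (Submodule.Quotient.restrictScalarsEquiv (Rq S t n) p).symm.toLinearMap
    let r : Wmod S t G n →ₗ[Rq S t n] Rq S t (n-1) :=
      (Submodule.liftQ (p.restrictScalars (Rq S t n)) φ hφk).comp req
    refine ⟨r, ?_⟩
    intro x
    obtain ⟨s, rfl⟩ := Ideal.Quotient.mk_surjective x
    rw [hf]
    rw [LinearMap.comp_apply, LinearEquiv.coe_toLinearMap,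
      Submodule.Quotient.restrictScalarsEquiv_symm_mk, Submodule.liftQ_apply]
    show Rmap S t (n-1) n (Nat.sub_le n 1) ((cmap S t G n s * sigmaEl S t G n).coeff 1)
        = Ideal.Quotient.mk _ s
    rw [cmap_apply, sigma_coeff, Rmap_mk]

end
end

section
/- Let X be a finitely generated A_n-module whose underlying R_n-module is isomorphic to R_n^{⊕r} ⊕ R_{n-1}^{⊕s} for some non-negative integers r and s, and suppose that the kG-module t^{n-1}X is projective over kG. Then X is isomorphic as an A_n-module to a direct sum P ⊕ X″, where P is a finitely generated projective A_n-module and X″ is an A_n-module with t^{n-1}X″ = 0. -/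
set_option linter.unusedSectionVars false


open scoped TensorProduct DirectSum

noncomputable section

variable (S : Type) [CommRing S] [IsDomain S] [IsDiscreteValuationRing S]
variable (t : S)
variable (G : Type) [Group G] [Fintype G]

lemma tbar_pow_eq_zero (n : ℕ) : tbar S t n ^ n = 0 := by
  rw [tbar, ← map_pow, Ideal.Quotient.eq_zero_iff_mem]
  exact Ideal.subset_span rfl

lemma rmap_mk (i n : ℕ) (h : i ≤ n) (x : S) :
    Rmap S t i n h (Ideal.Quotient.mk _ x) = Ideal.Quotient.mk _ x :=
  Ideal.Quotient.factor_mk _ _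

lemma rmap_surj (i n : ℕ) (h : i ≤ n) : Function.Surjective (Rmap S t i n h) := by
  intro y
  obtain ⟨y', rfl⟩ := Ideal.Quotient.mk_surjective y
  exact ⟨Ideal.Quotient.mk _ y', rmap_mk S t i n h y'⟩

lemma rmap_ker (n : ℕ) (hn : 1 ≤ n) (r : Rq S t n) (h : Rmap S t 1 n hn r = 0) :
    ∃ c, r = tbar S t n * c := by
  obtain ⟨r', rfl⟩ := Ideal.Quotient.mk_surjective r
  rw [rmap_mk, Ideal.Quotient.eq_zero_iff_mem] at h
  rw [pow_one] at h
  obtain ⟨c, rfl⟩ := Ideal.mem_span_singleton'.mp h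
  exact ⟨Ideal.Quotient.mk _ c, by rw [tbar, ← map_mul, mul_comm]⟩

lemma amap_of (i n : ℕ) (h : i ≤ n) (g : G) :
    Amap S t G i n h (MonoidAlgebra.of _ G g) = MonoidAlgebra.of _ G g := by
  letI : Algebra (Rq S t n) (Aq S t G i) :=
    RingHom.toAlgebra' ((algebraMap (Rq S t i) (Aq S t G i)).comp (Rmap S t i n h))
      (fun r x => Algebra.commutes (Rmap S t i n h r) x)
  exact MonoidAlgebra.lift_of _ g

lemma amap_algebraMap (i n : ℕ) (h : i ≤ n) (r : Rq S t n) :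
    Amap S t G i n h (algebraMap _ _ r) = algebraMap _ _ (Rmap S t i n h r) := by
  letI : Algebra (Rq S t n) (Aq S t G i) :=
    RingHom.toAlgebra' ((algebraMap (Rq S t i) (Aq S t G i)).comp (Rmap S t i n h))
      (fun r x => Algebra.commutes (Rmap S t i n h r) x)
  exact ((MonoidAlgebra.lift (Rq S t n) (Aq S t G i) G) (MonoidAlgebra.of (Rq S t i) G)).commutes r

lemma amap_single (i n : ℕ) (h : i ≤ n) (g : G) (r : Rq S t n) :
    Amap S t G i n h (MonoidAlgebra.single g r) = MonoidAlgebra.single g (Rmap S t i n h r) := by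
  rw [MonoidAlgebra.single_eq_algebraMap_mul_of, MonoidAlgebra.single_eq_algebraMap_mul_of,
    map_mul, amap_algebraMap, amap_of]

lemma amap_surj (n : ℕ) (hn : 1 ≤ n) : Function.Surjective (Amap S t G 1 n hn) := by
  intro y
  induction y using MonoidAlgebra.induction_on with
  | of g => exact ⟨MonoidAlgebra.of _ G g, amap_of S t G 1 n hn g⟩
  | add f g hf hg =>
    obtain ⟨x, rfl⟩ := hf; obtain ⟨x', rfl⟩ := hg
    exact ⟨x + x', map_add _ _ _⟩
  | smul r f hf =>
    obtain ⟨x, rfl⟩ := hf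
    obtain ⟨r', hr'⟩ := rmap_surj S t 1 n hn r
    refine ⟨algebraMap _ _ r' * x, ?_⟩
    rw [map_mul, amap_algebraMap, hr', Algebra.smul_def]

lemma amap_apply (n : ℕ) (hn : 1 ≤ n) (x : Aq S t G n) (g : G) :
    (Amap S t G 1 n hn x).coeff g = Rmap S t 1 n hn (x.coeff g) := by
  induction x using MonoidAlgebra.induction_linear with
  | zero => simp
  | add f g hf hg => rw [map_add, MonoidAlgebra.coeff_add, Finsupp.add_apply, hf, hg, MonoidAlgebra.coeff_add, Finsupp.add_apply, map_add]
  | single g' r =>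
    rw [amap_single]
    classical
    rw [MonoidAlgebra.coeff_single, MonoidAlgebra.coeff_single, Finsupp.single_apply, Finsupp.single_apply]
    split <;> simp

lemma amap_ker (n : ℕ) (hn : 1 ≤ n) (x : Aq S t G n) (hx : Amap S t G 1 n hn x = 0) :
    ∃ a, x = algebraMap (Rq S t n) (Aq S t G n) (tbar S t n) * a := by
  classical
  have hco : ∀ g : G, ∃ c, x.coeff g = tbar S t n * c := by
    intro g
    apply rmap_ker S t n hn
    rw [← amap_apply S t G n hn x g, hx]
    rfl
  choose c hc using hco
  refine ⟨x.coeff.sum fun g _ => MonoidAlgebra.single g (c g), ?_⟩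
  rw [Finsupp.mul_sum]
  have key : ∀ g : G, (algebraMap (Rq S t n) (Aq S t G n) (tbar S t n)) *
      MonoidAlgebra.single g (c g) = MonoidAlgebra.single g (x.coeff g) := by
    intro g
    rw [MonoidAlgebra.single_eq_algebraMap_mul_of, ← mul_assoc, ← map_mul, ← hc g,
      ← MonoidAlgebra.single_eq_algebraMap_mul_of]
  calc x = x.coeff.sum fun g r => MonoidAlgebra.single g r := (MonoidAlgebra.sum_coeff_single x).symm
    _ = _ := by
        rw [Finsupp.sum, Finsupp.sum]
        exact Finset.sum_congr rfl fun g hg => (key g).symm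


lemma baer_R (ht : Irreducible t) (n : ℕ) : Module.Baer (Rq S t n) (Rq S t n) := by
  intro I g
  haveI : IsPrincipalIdealRing (Rq S t n) :=
    IsPrincipalIdealRing.of_surjective (Ideal.Quotient.mk _) Ideal.Quotient.mk_surjective
  obtain ⟨a, ha⟩ : ∃ a, I = Ideal.span {a} := ⟨_, (Ideal.span_singleton_generator I).symm⟩
  subst ha
  by_cases ha0 : a = 0
  · subst ha0
    refine ⟨0, fun x mem => ?_⟩
    have hx : x = 0 := by
      have := Ideal.mem_span_singleton.mp mem
      simpa [zero_dvd_iff] using this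
    have hsub : (⟨x, mem⟩ : Ideal.span ({0} : Set (Rq S t n))) = 0 := Subtype.ext hx
    rw [hsub, map_zero, LinearMap.zero_apply]
  · obtain ⟨a', rfl⟩ := Ideal.Quotient.mk_surjective a
    have ha'0 : a' ≠ 0 := by rintro rfl; exact ha0 (map_zero _)
    obtain ⟨j, u, rfl⟩ := IsDiscreteValuationRing.eq_unit_mul_pow_irreducible ha'0 ht
    have hjn : j < n := by
      by_contra hjge
      push_neg at hjge
      apply ha0
      rw [Ideal.Quotient.eq_zero_iff_mem]
      refine Ideal.mem_span_singleton.mpr ⟨(u : S) * t ^ (j - n), ?_⟩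
      rw [mul_comm (t ^ n), mul_assoc, ← pow_add, Nat.sub_add_cancel hjge]
    have hamem : (Ideal.Quotient.mk (Ideal.span {t ^ n})) ((u : S) * t ^ j) ∈
        Ideal.span {(Ideal.Quotient.mk (Ideal.span {t ^ n})) ((u : S) * t ^ j)} :=
      Ideal.mem_span_singleton_self _
    obtain ⟨y', hy'⟩ := Ideal.Quotient.mk_surjective (g ⟨_, hamem⟩)
    have hkill : (Ideal.Quotient.mk (Ideal.span {t ^ n}) (t ^ (n - j))) *
        (Ideal.Quotient.mk (Ideal.span {t ^ n})) ((u : S) * t ^ j) = 0 := by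
      rw [← map_mul, Ideal.Quotient.eq_zero_iff_mem]
      refine Ideal.mem_span_singleton.mpr ⟨(u : S), ?_⟩
      rw [← mul_assoc, mul_right_comm, ← pow_add, Nat.sub_add_cancel hjn.le]
    have hyki : (Ideal.Quotient.mk (Ideal.span {t ^ n}) (t ^ (n - j))) * g ⟨_, hamem⟩ = 0 := by
      have hz : (Ideal.Quotient.mk (Ideal.span {t ^ n}) (t ^ (n - j))) •
          (⟨_, hamem⟩ : Ideal.span {(Ideal.Quotient.mk (Ideal.span {t ^ n})) ((u : S) * t ^ j)})
          = 0 := by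
        apply Subtype.ext
        simpa [smul_eq_mul] using hkill
      rw [← smul_eq_mul, ← map_smul, hz, map_zero]
    have hex : ∃ cc : S, y' = t ^ j * cc := by
      have hmem : t ^ (n - j) * y' ∈ Ideal.span {t ^ n} := by
        rw [← Ideal.Quotient.eq_zero_iff_mem, map_mul, hy', hyki]
      obtain ⟨cc, hcc⟩ := Ideal.mem_span_singleton'.mp hmem
      refine ⟨cc, ?_⟩
      have hne : t ^ (n - j) ≠ 0 := pow_ne_zero _ ht.ne_zero
      apply mul_left_cancel₀ hne
      rw [← hcc, ← mul_assoc, ← pow_add, Nat.sub_add_cancel hjn.le]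
      ring
    obtain ⟨cc, hcc⟩ := hex
    have haw : (Ideal.Quotient.mk (Ideal.span {t ^ n})) ((u : S) * t ^ j) *
        (Ideal.Quotient.mk (Ideal.span {t ^ n})) (((u⁻¹ : Sˣ) : S) * cc) = g ⟨_, hamem⟩ := by
      rw [← map_mul, ← hy']
      congr 1
      rw [hcc]
      have huu : (u : S) * ((u⁻¹ : Sˣ) : S) = 1 := u.mul_inv
      calc (u : S) * t ^ j * (((u⁻¹ : Sˣ) : S) * cc)
          = ((u : S) * ((u⁻¹ : Sˣ) : S)) * (t ^ j * cc) := by ring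
        _ = t ^ j * cc := by rw [huu, one_mul]
    refine ⟨LinearMap.toSpanSingleton _ _
      ((Ideal.Quotient.mk (Ideal.span {t ^ n})) (((u⁻¹ : Sˣ) : S) * cc)), fun x mem => ?_⟩
    obtain ⟨d, hd⟩ := Ideal.mem_span_singleton'.mp mem
    have hsub : (⟨x, mem⟩ : Ideal.span {(Ideal.Quotient.mk (Ideal.span {t ^ n})) ((u : S) * t ^ j)})
        = d • ⟨_, hamem⟩ := by
      apply Subtype.ext
      simpa [smul_eq_mul] using hd.symm
    rw [LinearMap.toSpanSingleton_apply, hsub, map_smul, smul_eq_mul, smul_eq_mul, ← haw, ← hd]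
    ring

lemma inj_R (ht : Irreducible t) (n : ℕ) : Module.Injective (Rq S t n) (Rq S t n) :=
  (baer_R S t ht n).injective


section Ext

lemma alg_mul_apply (n : ℕ) (r : Rq S t n) (x : Aq S t G n) (u : G) :
    (algebraMap (Rq S t n) (Aq S t G n) r * x).coeff u = r * x.coeff u := by
  have h1 : algebraMap (Rq S t n) (Aq S t G n) r = MonoidAlgebra.single 1 r := by
    rw [show (algebraMap (Rq S t n) (Aq S t G n)) r
      = (⇑(algebraMap (Rq S t n) (Aq S t G n))) r from rfl, MonoidAlgebra.coe_algebraMap]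
    simp
  rw [h1, MonoidAlgebra.coeff_single_one_mul]

lemma of_mul_apply (n : ℕ) (g : G) (x : Aq S t G n) (u : G) :
    (MonoidAlgebra.of (Rq S t n) G g * x).coeff u = x.coeff (g⁻¹ * u) := by
  rw [show MonoidAlgebra.of (Rq S t n) G g = MonoidAlgebra.single g 1 from rfl,
    MonoidAlgebra.coeff_single_mul_apply, one_mul]

variable {S t G} in
/-- Extension lemma: `A_n` is self-injective; any `A`-linear functional extends
along an injection. -/
lemma ext_lemma (ht : Irreducible t) (n : ℕ) (M N : Type) [AddCommGroup M] [AddCommGroup N]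
    [Module (Aq S t G n) M] [Module (Aq S t G n) N] (φ : M →ₗ[Aq S t G n] N)
    (hφ : Function.Injective φ) (f : M →ₗ[Aq S t G n] Aq S t G n) :
    ∃ h : N →ₗ[Aq S t G n] Aq S t G n, ∀ x, h (φ x) = f x := by
  classical
  letI mM : Module (Rq S t n) M := Module.compHom M (algebraMap (Rq S t n) (Aq S t G n))
  letI mN : Module (Rq S t n) N := Module.compHom N (algebraMap (Rq S t n) (Aq S t G n))
  have smulM : ∀ (r : Rq S t n) (x : M), r • x = algebraMap (Rq S t n) (Aq S t G n) r • x :=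
    fun r x => rfl
  have smulN : ∀ (r : Rq S t n) (x : N), r • x = algebraMap (Rq S t n) (Aq S t G n) r • x :=
    fun r x => rfl
  -- φ as R-linear map
  let φR : M →ₗ[Rq S t n] N :=
    { toFun := φ
      map_add' := fun x y => map_add φ x y
      map_smul' := fun r x => by
        simp only [RingHom.id_apply]
        rw [smulM, map_smul]
        exact (smulN r (φ x)).symm }
  -- coefficient-at-one functional
  let f0 : M →ₗ[Rq S t n] Rq S t n :=
    { toFun := fun x => (f x).coeff 1
      map_add' := fun x y => by
        show (f (x + y)).coeff 1 = (f x).coeff 1 + (f y).coeff 1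
        rw [map_add, MonoidAlgebra.coeff_add, Finsupp.add_apply]
      map_smul' := fun r x => by
        simp only [RingHom.id_apply]
        show (f (r • x)).coeff 1 = r * (f x).coeff 1
        rw [smulM, map_smul, smul_eq_mul, alg_mul_apply] }
  obtain ⟨h₀, hh₀⟩ := (inj_R S t ht n).out φR hφ f0
  -- the extension
  let hfun : N → Aq S t G n := fun y =>
    ∑ v : G, MonoidAlgebra.single v (h₀ ((MonoidAlgebra.of (Rq S t n) G v⁻¹) • y))
  have hcoeff : ∀ (y : N) (u : G), (hfun y).coeff u = h₀ ((MonoidAlgebra.of (Rq S t n) G u⁻¹) • y) := by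
    intro y u
    show (∑ v : G, MonoidAlgebra.single v (h₀ ((MonoidAlgebra.of (Rq S t n) G v⁻¹) • y))).coeff u = _
    rw [MonoidAlgebra.coeff_sum, Finset.sum_apply']
    rw [Finset.sum_eq_single u]
    · rw [MonoidAlgebra.coeff_single, Finsupp.single_eq_same]
    · intro b _ hb
      rw [MonoidAlgebra.coeff_single, Finsupp.single_eq_of_ne' hb]
    · intro hu
      exact absurd (Finset.mem_univ u) hu
  have hadd : ∀ y y', hfun (y + y') = hfun y + hfun y' := by
    intro y y'
    apply MonoidAlgebra.ext; apply Finsupp.ext; intro u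
    rw [MonoidAlgebra.coeff_add, Finsupp.add_apply, hcoeff, hcoeff, hcoeff, smul_add, map_add]
  have halg : ∀ (r : Rq S t n) (y : N),
      hfun (algebraMap (Rq S t n) (Aq S t G n) r • y)
        = algebraMap (Rq S t n) (Aq S t G n) r * hfun y := by
    intro r y
    apply MonoidAlgebra.ext; apply Finsupp.ext; intro u
    have hcomm : (MonoidAlgebra.of (Rq S t n) G u⁻¹) • (algebraMap (Rq S t n) (Aq S t G n) r • y)
        = algebraMap (Rq S t n) (Aq S t G n) r • ((MonoidAlgebra.of (Rq S t n) G u⁻¹) • y) := by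
      rw [← mul_smul, ← mul_smul, Algebra.commutes]
    rw [hcoeff, hcomm, ← smulN, map_smul, smul_eq_mul, alg_mul_apply, hcoeff]
  have hof : ∀ (g : G) (y : N),
      hfun ((MonoidAlgebra.of (Rq S t n) G g) • y)
        = (MonoidAlgebra.of (Rq S t n) G g) * hfun y := by
    intro g y
    apply MonoidAlgebra.ext; apply Finsupp.ext; intro u
    rw [hcoeff, ← mul_smul, ← map_mul, of_mul_apply, hcoeff, mul_inv_rev, inv_inv]
  have hsmul : ∀ (a : Aq S t G n) (y : N), hfun (a • y) = a * hfun y := by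
    intro a y
    induction a using MonoidAlgebra.induction_on with
    | of g => exact hof g y
    | add a b ha hb => rw [add_smul, hadd, ha, hb, add_mul]
    | smul r a ha =>
      have h1 : (r • a) • y = algebraMap (Rq S t n) (Aq S t G n) r • (a • y) := by
        rw [Algebra.smul_def, mul_smul]
      rw [h1, halg, ha, Algebra.smul_def, mul_assoc]
  let hlin : N →ₗ[Aq S t G n] Aq S t G n :=
    { toFun := hfun
      map_add' := hadd
      map_smul' := fun a y => by
        simp only [RingHom.id_apply, smul_eq_mul]
        exact hsmul a y }
  refine ⟨hlin, fun x => ?_⟩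
  show hfun (φ x) = f x
  apply MonoidAlgebra.ext; apply Finsupp.ext; intro u
  rw [hcoeff]
  have h2 : (MonoidAlgebra.of (Rq S t n) G u⁻¹) • φ x
      = φ ((MonoidAlgebra.of (Rq S t n) G u⁻¹) • x) :=
    (map_smul φ _ _).symm
  rw [h2]
  have h3 : h₀ (φR ((MonoidAlgebra.of (Rq S t n) G u⁻¹) • x))
      = f0 ((MonoidAlgebra.of (Rq S t n) G u⁻¹) • x) := hh₀ _
  rw [show φ ((MonoidAlgebra.of (Rq S t n) G u⁻¹) • x)
      = φR ((MonoidAlgebra.of (Rq S t n) G u⁻¹) • x) from rfl, h3]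
  show (f ((MonoidAlgebra.of (Rq S t n) G u⁻¹) • x)).coeff 1 = (f x).coeff u
  rw [map_smul, smul_eq_mul, of_mul_apply, inv_inv, mul_one]

end Ext


section Phi

variable (n : ℕ) (hn : 1 ≤ n) (m : ℕ)

/-- Componentwise application of `Amap` to a vector. -/
def AmapPi : (Fin m → Aq S t G n) → (Fin m → Aq S t G 1) :=
  fun w i => Amap S t G 1 n hn (w i)

lemma amapPi_surj : ∀ v : Fin m → Aq S t G 1, ∃ w, AmapPi S t G n hn m w = v := by
  intro v
  choose w hw using fun i => amap_surj S t G n hn (v i)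
  exact ⟨w, funext hw⟩

lemma pi_decomp {B : Type} [Ring B] (w : Fin m → B) :
    ∑ i, w i • (Pi.single i 1 : Fin m → B) = w := by
  have h1 : ∀ i, w i • (Pi.single i 1 : Fin m → B) = Pi.single i (w i) := by
    intro i; funext j
    classical
    simp [Pi.single_apply, Pi.smul_apply, mul_ite]
  rw [Finset.sum_congr rfl fun i _ => h1 i]
  exact Finset.univ_sum_single w

lemma end_apply_eq_sum (f : Module.End (Aq S t G n) (Fin m → Aq S t G n))
    (w : Fin m → Aq S t G n) (j : Fin m) :
    f w j = ∑ i, w i * (f (Pi.single i 1) j) := by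
  conv_lhs => rw [← pi_decomp (m := m) w]
  rw [map_sum]
  rw [Finset.sum_apply]
  refine Finset.sum_congr rfl fun i _ => ?_
  rw [map_smul]
  simp [Pi.smul_apply, smul_eq_mul]

/-- The induced endomorphism over `A₁`. -/
def PhiFun (f : Module.End (Aq S t G n) (Fin m → Aq S t G n)) :
    Module.End (Aq S t G 1) (Fin m → Aq S t G 1) :=
  { toFun := fun v j => ∑ i, v i * Amap S t G 1 n hn (f (Pi.single i 1) j)
    map_add' := by
      intro v w; funext j
      simp [Pi.add_apply, add_mul, Finset.sum_add_distrib]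
    map_smul' := by
      intro b v; funext j
      simp [Pi.smul_apply, smul_eq_mul, Finset.mul_sum, mul_assoc] }

lemma phi_comm (f : Module.End (Aq S t G n) (Fin m → Aq S t G n)) (w : Fin m → Aq S t G n) :
    PhiFun S t G n hn m f (AmapPi S t G n hn m w) = AmapPi S t G n hn m (f w) := by
  funext j
  show (∑ i, (AmapPi S t G n hn m w) i * Amap S t G 1 n hn (f (Pi.single i 1) j)) = _
  have h0 : AmapPi S t G n hn m (f w) j = Amap S t G 1 n hn (f w j) := rfl
  rw [h0, end_apply_eq_sum S t G n m f w j, map_sum]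
  refine Finset.sum_congr rfl fun i _ => ?_
  rw [map_mul]
  rfl

/-- The ring homomorphism `End_A(A^m) → End_{A₁}(A₁^m)`. -/
def PhiRing : Module.End (Aq S t G n) (Fin m → Aq S t G n) →+*
    Module.End (Aq S t G 1) (Fin m → Aq S t G 1) :=
  { toFun := PhiFun S t G n hn m
    map_one' := by
      apply LinearMap.ext; intro v
      obtain ⟨w, rfl⟩ := amapPi_surj S t G n hn m v
      show PhiFun S t G n hn m 1 (AmapPi S t G n hn m w) = AmapPi S t G n hn m w
      rw [phi_comm]
      rfl
    map_mul' := by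
      intro f g
      apply LinearMap.ext; intro v
      obtain ⟨w, rfl⟩ := amapPi_surj S t G n hn m v
      show PhiFun S t G n hn m (f * g) (AmapPi S t G n hn m w)
        = PhiFun S t G n hn m f (PhiFun S t G n hn m g (AmapPi S t G n hn m w))
      rw [phi_comm, phi_comm, phi_comm]
      rfl
    map_zero' := by
      apply LinearMap.ext; intro v
      obtain ⟨w, rfl⟩ := amapPi_surj S t G n hn m v
      show PhiFun S t G n hn m 0 (AmapPi S t G n hn m w) = 0
      rw [phi_comm]
      show AmapPi S t G n hn m ((0 : Module.End _ _) w) = 0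
      rw [LinearMap.zero_apply]
      funext i
      exact map_zero _
    map_add' := by
      intro f g
      apply LinearMap.ext; intro v
      obtain ⟨w, rfl⟩ := amapPi_surj S t G n hn m v
      show PhiFun S t G n hn m (f + g) (AmapPi S t G n hn m w)
        = PhiFun S t G n hn m f (AmapPi S t G n hn m w)
          + PhiFun S t G n hn m g (AmapPi S t G n hn m w)
      rw [phi_comm, phi_comm, phi_comm]
      show AmapPi S t G n hn m ((f + g) w) = _
      rw [LinearMap.add_apply]
      funext i
      exact map_add _ _ _ }

lemma phi_ker_nilpotent :
    ∀ f ∈ RingHom.ker (PhiRing S t G n hn m), IsNilpotent f := by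
  intro f hf
  rw [RingHom.mem_ker] at hf
  have hf' : PhiFun S t G n hn m f = 0 := hf
  have hT : ∀ w, ∃ w', f w = (algebraMap (Rq S t n) (Aq S t G n) (tbar S t n)) • w' := by
    intro w
    have h1 : AmapPi S t G n hn m (f w) = 0 := by
      rw [← phi_comm, hf']
      rfl
    have h2 : ∀ j, Amap S t G 1 n hn (f w j) = 0 := fun j => congrFun h1 j
    choose a ha using fun j => amap_ker S t G n hn (f w j) (h2 j)
    refine ⟨a, funext fun j => ?_⟩
    rw [Pi.smul_apply, smul_eq_mul]
    exact ha j
  have hTk : ∀ (k : ℕ) (w), ∃ w',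
      (f ^ k) w = (algebraMap (Rq S t n) (Aq S t G n) (tbar S t n)) ^ k • w' := by
    intro k
    induction k with
    | zero => intro w; exact ⟨w, by rw [pow_zero, pow_zero, one_smul]; rfl⟩
    | succ k ih =>
      intro w
      obtain ⟨w1, hw1⟩ := hT w
      obtain ⟨w2, hw2⟩ := ih w1
      refine ⟨w2, ?_⟩
      rw [pow_succ, Module.End.mul_apply, hw1, map_smul, hw2, smul_smul,
        ← pow_succ']
  refine ⟨n, ?_⟩
  apply LinearMap.ext; intro w
  obtain ⟨w', hw'⟩ := hTk n w
  rw [hw', ← map_pow, tbar_pow_eq_zero, map_zero, zero_smul]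
  rfl

end Phi


set_option maxHeartbeats 2000000 in
/-- Let `X` be a finitely generated `A_n`-module whose underlying
`R_n`-module is isomorphic to `R_n^{⊕r} ⊕ R_{n-1}^{⊕s}`, and suppose that the `kG`-module
`t^{n-1}X` is projective over `kG = A_1`.  Then `X` decomposes as a direct sum `P ⊕ X″`
of `A_n`-modules, where `P` is finitely generated projective over `A_n` and
`t^{n-1}X″ = 0`. -/
theorem statement13 (ht : Irreducible t) (n : ℕ) (hn : 1 ≤ n)
    (X : Type) [AddCommGroup X] [Module (Aq S t G n) X] [Module.Finite (Aq S t G n) X]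
    (r s : ℕ)
    (hX :
      letI : Module (Rq S t n) X :=
        Module.compHom X (algebraMap (Rq S t n) (Aq S t G n))
      letI : Module (Rq S t n) (Rq S t (n - 1)) :=
        Module.compHom _ (Rmap S t (n - 1) n (Nat.sub_le n 1))
      Nonempty (X ≃ₗ[Rq S t n] ((Fin r → Rq S t n) × (Fin s → Rq S t (n - 1)))))
    (hproj :
      ∃ inst : Module (Aq S t G 1) ↥(tSub S t G n (n - 1) X),
        (∀ (a : Aq S t G n) (y : ↥(tSub S t G n (n - 1) X)),
          letI := inst
          Amap S t G 1 n hn a • y = a • y) ∧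
        letI := inst
        Module.Projective (Aq S t G 1) ↥(tSub S t G n (n - 1) X)) :
    ∃ P X'' : Submodule (Aq S t G n) X,
      IsCompl P X'' ∧ Module.Finite (Aq S t G n) ↥P ∧
        Module.Projective (Aq S t G n) ↥P ∧
        ∀ x ∈ X'', algebraMap (Rq S t n) (Aq S t G n) (tbar S t n ^ (n - 1)) • x = 0 := by
  classical
  obtain ⟨instY, hcompat, hprojY⟩ := hproj
  letI := instY
  haveI := hprojY
  -- abbreviations (only as local defs in the proof)
  -- Te = t^{n-1} as an element of A, Te1 = t as an element of A
  set Te : Aq S t G n := algebraMap (Rq S t n) (Aq S t G n) (tbar S t n ^ (n - 1)) with hTe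
  set Te1 : Aq S t G n := algebraMap (Rq S t n) (Aq S t G n) (tbar S t n) with hTe1
  -- step 1 : Y as range of multiplication by Te
  let qX : X →ₗ[Aq S t G n] X :=
    { toFun := fun x => Te • x
      map_add' := fun x y => smul_add Te x y
      map_smul' := fun a x => by
        simp only [RingHom.id_apply]
        rw [smul_smul, smul_smul, Algebra.commutes] }
  have hmemY : ∀ x : X, Te • x ∈ tSub S t G n (n - 1) X := fun x =>
    Submodule.subset_span ⟨x, rfl⟩
  have hY : tSub S t G n (n - 1) X = LinearMap.range qX := by
    rw [tSub]
    have hset : (Set.range fun x : X =>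
        algebraMap (Rq S t n) (Aq S t G n) (tbar S t n ^ (n - 1)) • x)
        = ↑(LinearMap.range qX) := by
      ext z
      constructor
      · rintro ⟨x, rfl⟩; exact ⟨x, rfl⟩
      · rintro ⟨x, rfl⟩; exact ⟨x, rfl⟩
    rw [hset, Submodule.span_eq]
  let q' : X →ₗ[Aq S t G n] ↥(tSub S t G n (n - 1) X) :=
    LinearMap.codRestrict (tSub S t G n (n - 1) X) qX hmemY
  have hq'surj : Function.Surjective q' := by
    rintro ⟨z, hz⟩
    rw [hY] at hz
    obtain ⟨x, hx⟩ := hz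
    exact ⟨x, Subtype.ext hx⟩
  -- step 2 : finiteness of Y over A₁
  haveI hfinA : Module.Finite (Aq S t G n) ↥(tSub S t G n (n - 1) X) :=
    Module.Finite.of_surjective q' hq'surj
  haveI hfinA1 : Module.Finite (Aq S t G 1) ↥(tSub S t G n (n - 1) X) := by
    obtain ⟨sfin, hsfin⟩ := hfinA.fg_top
    constructor
    refine ⟨sfin, ?_⟩
    rw [eq_top_iff]
    intro y _
    have hy : y ∈ Submodule.span (Aq S t G n) ↑sfin := by rw [hsfin]; trivial
    refine Submodule.span_induction ?_ ?_ ?_ ?_ hy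
      (p := fun z _ => z ∈ Submodule.span (Aq S t G 1) (↑sfin : Set ↥(tSub S t G n (n - 1) X)))
    · intro z hz; exact Submodule.subset_span hz
    · exact Submodule.zero_mem _
    · intro a b _ _ ha hb; exact Submodule.add_mem _ ha hb
    · intro a z _ hz
      rw [← hcompat a z]
      exact Submodule.smul_mem _ _ hz
  -- step 3 : free presentation over A₁ and idempotent
  obtain ⟨mdim, θ, hθ⟩ := Module.Finite.exists_fin' (Aq S t G 1) ↥(tSub S t G n (n - 1) X)
  obtain ⟨σ, hσ⟩ := Module.projective_lifting_property θ LinearMap.id hθ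
  have hθσ : ∀ y, θ (σ y) = y := fun y => LinearMap.congr_fun hσ y
  set e₁ : Module.End (Aq S t G 1) (Fin mdim → Aq S t G 1) := σ.comp θ with he₁def
  have he₁ : IsIdempotentElem e₁ := by
    show e₁ * e₁ = e₁
    apply LinearMap.ext; intro v
    show σ (θ (σ (θ v))) = σ (θ v)
    rw [hθσ]
  -- a (non-idempotent) preimage of e₁
  have hpre : e₁ ∈ (PhiRing S t G n hn mdim).range := by
    choose W hW using fun (i j : Fin mdim) => amap_surj S t G n hn (e₁ (Pi.single i 1) j)
    refine ⟨{ toFun := fun v j => ∑ i, v i * W i j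
              map_add' := by
                intro v w; funext j
                simp [Pi.add_apply, add_mul, Finset.sum_add_distrib]
              map_smul' := by
                intro b v; funext j
                simp [Pi.smul_apply, smul_eq_mul, Finset.mul_sum, mul_assoc] }, ?_⟩
    apply LinearMap.ext; intro v
    funext j
    show (∑ i, v i * Amap S t G 1 n hn _) = e₁ v j
    have hfd : ∀ i : Fin mdim,
        (∑ k, (Pi.single i 1 : Fin mdim → Aq S t G n) k * W k j) = W i j := by
      intro i
      rw [Finset.sum_eq_single i]
      · rw [Pi.single_eq_same, one_mul]
      · intro b _ hb
        rw [Pi.single_eq_of_ne hb, zero_mul]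
      · intro hi; exact absurd (Finset.mem_univ i) hi
    rw [end_apply_eq_sum S t G 1 mdim e₁ v j]
    refine Finset.sum_congr rfl fun i _ => ?_
    congr 1
    rw [show (({ toFun := fun v j => ∑ i, v i * W i j, map_add' := _, map_smul' := _ } :
      Module.End (Aq S t G n) (Fin mdim → Aq S t G n)) (Pi.single i 1)) j
      = ∑ k, (Pi.single i 1 : Fin mdim → Aq S t G n) k * W k j from rfl, hfd i, hW i j]
  obtain ⟨E, hEidem, hEe⟩ := exists_isIdempotentElem_eq_of_ker_isNilpotent
    (PhiRing S t G n hn mdim) (phi_ker_nilpotent S t G n hn mdim) e₁ hpre he₁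
  have hEfun : PhiFun S t G n hn mdim E = e₁ := hEe
  have hEfix : ∀ v ∈ LinearMap.range E, E v = v := by
    rintro v ⟨w, rfl⟩
    rw [← Module.End.mul_apply, hEidem]
  -- step 4 : the map π̂ : P₀ → Y
  let πh : ↥(LinearMap.range E) →ₗ[Aq S t G n] ↥(tSub S t G n (n - 1) X) :=
    { toFun := fun p => θ (AmapPi S t G n hn mdim ↑p)
      map_add' := fun p q => by
        show θ (AmapPi S t G n hn mdim ↑(p + q))
          = θ (AmapPi S t G n hn mdim ↑p) + θ (AmapPi S t G n hn mdim ↑q)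
        have h1 : AmapPi S t G n hn mdim ↑(p + q)
            = AmapPi S t G n hn mdim ↑p + AmapPi S t G n hn mdim ↑q := by
          funext i; simp [AmapPi]
        rw [h1, map_add]
      map_smul' := fun a p => by
        show θ (AmapPi S t G n hn mdim ↑(a • p))
          = (RingHom.id _) a • θ (AmapPi S t G n hn mdim ↑p)
        simp only [RingHom.id_apply]
        have h1 : AmapPi S t G n hn mdim ↑(a • p)
            = Amap S t G 1 n hn a • AmapPi S t G n hn mdim ↑p := by
          funext i; simp [AmapPi]
        rw [h1, map_smul, hcompat] }
  have hπsurj : ∀ y, ∃ p, πh p = y := by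
    intro y
    obtain ⟨v, hv⟩ := hθ y
    obtain ⟨w, rfl⟩ := amapPi_surj S t G n hn mdim v
    refine ⟨⟨E w, LinearMap.mem_range_self E w⟩, ?_⟩
    show θ (AmapPi S t G n hn mdim (E w)) = y
    rw [← phi_comm, hEfun]
    show θ (σ (θ (AmapPi S t G n hn mdim w))) = y
    rw [hθσ, hv]
  -- step 5 : kernel control for πh
  have hK1 : ∀ (u : Fin mdim → Aq S t G n) (hu : u ∈ LinearMap.range E),
      θ (AmapPi S t G n hn mdim u) = 0 → ∃ w ∈ LinearMap.range E, u = Te1 • w := by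
    intro u hu h0
    have h2 : AmapPi S t G n hn mdim u = 0 := by
      have h3 : AmapPi S t G n hn mdim u = e₁ (AmapPi S t G n hn mdim u) := by
        conv_lhs => rw [← hEfix u hu, ← phi_comm, hEfun]
      rw [h3, he₁def]
      show σ (θ (AmapPi S t G n hn mdim u)) = 0
      rw [h0, map_zero]
    have h4 : ∀ j, Amap S t G 1 n hn (u j) = 0 := fun j => congrFun h2 j
    choose a ha using fun j => amap_ker S t G n hn (u j) (h4 j)
    have h5 : u = Te1 • a := funext fun j => by
      rw [Pi.smul_apply, smul_eq_mul]; exact ha j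
    refine ⟨E a, LinearMap.mem_range_self E a, ?_⟩
    rw [← map_smul, ← h5]
    exact (hEfix u hu).symm
  -- step 6 : projectivity of P₀ and the lift φ
  haveI hprojF : Module.Projective (Aq S t G n) (Fin mdim → Aq S t G n) :=
    Module.Projective.of_basis (Pi.basisFun _ _)
  haveI hprojP0 : Module.Projective (Aq S t G n) ↥(LinearMap.range E) := by
    refine Module.Projective.of_split (LinearMap.range E).subtype E.rangeRestrict ?_
    apply LinearMap.ext; rintro ⟨u, hu⟩
    apply Subtype.ext
    show E u = u
    exact hEfix u hu
  obtain ⟨φ, hφeq⟩ := Module.projective_lifting_property q' πh hq'surj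
  have hφq : ∀ p, Te • φ p = ↑(πh p) := by
    intro p
    have := LinearMap.congr_fun hφeq p
    rw [← this]
    rfl
  -- step 7 : injectivity of φ
  have hφinj : Function.Injective φ := by
    rw [injective_iff_map_eq_zero]
    intro p hp0
    by_contra hpne
    set Q : ℕ → Prop := fun j => ∃ u ∈ LinearMap.range E, (↑p : Fin mdim → Aq S t G n) = Te1 ^ j • u
      with hQdef
    have hQ0 : Q 0 := ⟨↑p, p.2, by rw [pow_zero, one_smul]⟩
    set j := Nat.findGreatest Q (n - 1) with hjdef
    have hQj : Q j := Nat.findGreatest_spec (Nat.zero_le _) hQ0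
    have hjle : j ≤ n - 1 := Nat.findGreatest_le _
    obtain ⟨u, huP, hpu⟩ := hQj
    have hTn : Te1 ^ n = 0 := by
      rw [hTe1, ← map_pow, tbar_pow_eq_zero, map_zero]
    have hunot : ¬ ∃ w ∈ LinearMap.range E, u = Te1 • w := by
      rintro ⟨w, hwP, rfl⟩
      have hp1 : (↑p : Fin mdim → Aq S t G n) = Te1 ^ (j + 1) • w := by
        rw [hpu, smul_smul, ← pow_succ]
      by_cases hcase : j = n - 1
      · have hj1 : j + 1 = n := by omega
        rw [hj1, hTn, zero_smul] at hp1
        exact hpne (Subtype.ext hp1)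
      · have hgt : j < j + 1 := Nat.lt_succ_self j
        have hle : j + 1 ≤ n - 1 := by omega
        exact Nat.findGreatest_is_greatest hgt hle ⟨w, hwP, hp1⟩
    have hπu : πh ⟨u, huP⟩ ≠ 0 := by
      intro h0
      have h1 : θ (AmapPi S t G n hn mdim u) = 0 := h0
      exact hunot (hK1 u huP h1)
    apply hπu
    have h2 : Te1 ^ j • φ ⟨u, huP⟩ = φ p := by
      rw [← map_smul]
      congr 1
      apply Subtype.ext
      show Te1 ^ j • u = ↑p
      exact hpu.symm
    have h3 : Te • φ ⟨u, huP⟩ = 0 := by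
      have hTepow : Te = Te1 ^ (n - 1 - j) * Te1 ^ j := by
        rw [hTe, hTe1, map_pow, ← pow_add]
        congr 1
        omega
      rw [hTepow, mul_smul, h2, hp0, smul_zero]
    rw [hφq] at h3
    exact Subtype.ext h3
  -- step 8 : the retraction through self-injectivity
  have hext := fun i : Fin mdim => ext_lemma ht n ↥(LinearMap.range E) X φ hφinj
    ((LinearMap.proj i).comp (LinearMap.range E).subtype)
  choose hcomp hhcomp using hext
  set Hmap : X →ₗ[Aq S t G n] (Fin mdim → Aq S t G n) := LinearMap.pi hcomp with hHdef
  set ρ : X →ₗ[Aq S t G n] ↥(LinearMap.range E) := E.rangeRestrict.comp Hmap with hρdef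
  have hρφ : ∀ p, ρ (φ p) = p := by
    intro p
    apply Subtype.ext
    show E (Hmap (φ p)) = ↑p
    have h1 : Hmap (φ p) = ↑p := funext fun i => by
      rw [hHdef]
      show hcomp i (φ p) = (↑p : Fin mdim → Aq S t G n) i
      rw [hhcomp i p]
      rfl
    rw [h1]
    exact hEfix _ p.2
  set Pi2 : X →ₗ[Aq S t G n] X := φ.comp ρ with hPi2def
  have hfix : ∀ x, Pi2 (Pi2 x) = Pi2 x := by
    intro x
    show φ (ρ (φ (ρ x))) = φ (ρ x)
    rw [hρφ]
  have hrangeφ : ∀ p, φ p ∈ LinearMap.range Pi2 := by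
    intro p
    refine ⟨φ p, ?_⟩
    show φ (ρ (φ p)) = φ p
    rw [hρφ]
  have hfixr : ∀ x ∈ LinearMap.range Pi2, Pi2 x = x := by
    rintro x ⟨y, rfl⟩
    exact hfix y
  -- conclusion
  refine ⟨LinearMap.range Pi2, LinearMap.ker Pi2, ⟨?_, ?_⟩, ?_, ?_, ?_⟩
  · rw [Submodule.disjoint_def]
    intro x hxr hxk
    rw [← hfixr x hxr]
    exact hxk
  · rw [codisjoint_iff, eq_top_iff]
    intro x _
    refine Submodule.mem_sup.mpr ⟨Pi2 x, LinearMap.mem_range_self _ x, x - Pi2 x, ?_, ?_⟩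
    · rw [LinearMap.mem_ker, map_sub, hfix, sub_self]
    · rw [add_sub_cancel]
  · exact Module.Finite.of_surjective Pi2.rangeRestrict (LinearMap.surjective_rangeRestrict Pi2)
  · refine Module.Projective.of_split
      (Hmap.comp (LinearMap.range Pi2).subtype)
      (LinearMap.codRestrict (LinearMap.range Pi2) (φ.comp E.rangeRestrict)
        (fun v => hrangeφ _)) ?_
    apply LinearMap.ext; rintro ⟨x, hx⟩
    apply Subtype.ext
    show φ (E.rangeRestrict (Hmap x)) = x
    have h1 : φ (E.rangeRestrict (Hmap x)) = Pi2 x := rfl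
    rw [h1]
    exact hfixr x hx
  · intro x hx
    rw [LinearMap.mem_ker] at hx
    have h1 : Te • x ∈ LinearMap.range Pi2 := by
      obtain ⟨p, hp⟩ := hπsurj (q' x)
      have h2 : Te • x = ↑(πh p) := by
        rw [hp]
        rfl
      rw [h2, ← hφq p, ← map_smul]
      exact hrangeφ _
    have h3 : Te • x = Pi2 (Te • x) := (hfixr _ h1).symm
    rw [map_smul, hx, smul_zero] at h3
    exact h3

end
end
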